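/- Let p ≤ k be positive integers, let ρ ≥ 1, let v¹,…,vⁿ ∈ ℝ^p, and let m ∈ ℤⁿ with mᵢ ≥ 0 and Σᵢ mᵢ = k. Set S = Σᵢ mᵢ vⁱ(vⁱ)ᵀ and assume S is invertible. Suppose that for every index i with mᵢ > 0 and every j ∈ {1,…,n} one has det(S − vⁱ(vⁱ)ᵀ + vʲ(vʲ)ᵀ) ≤ ρ·det(S). Then for every j ∈ {1,…,n}, (vʲ)ᵀ S⁻¹ vʲ ≤ (p + k(ρ−1))/(k − p + 1). -/

import Mathlib

open Matrix BigOperators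

private lemma psd_vecMulVec {p : ℕ} (x : Fin p → ℝ) : (vecMulVec x x).PosSemidef := by
  refine posSemidef_iff_dotProduct_mulVec.mpr ⟨?_, ?_⟩
  · ext a b
    simp [vecMulVec_apply, mul_comm]
  · intro y
    have h : dotProduct (star y) (vecMulVec x x *ᵥ y) = (x ⬝ᵥ y) * (x ⬝ᵥ y) := by
      simp only [star_trivial, dotProduct, Matrix.mulVec, vecMulVec_apply,
        Finset.mul_sum, Finset.sum_mul]
      rw [Finset.sum_comm]
      apply Finset.sum_congr rfl; intro a _
      apply Finset.sum_congr rfl; intro b _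
      ring
    rw [h]
    exact mul_self_nonneg _

private lemma psd_smul' {p : ℕ} {A : Matrix (Fin p) (Fin p) ℝ} (hA : A.PosSemidef)
    {c : ℝ} (hc : 0 ≤ c) : (c • A).PosSemidef := by
  refine posSemidef_iff_dotProduct_mulVec.mpr ⟨?_, ?_⟩
  · show (c • A)ᴴ = c • A
    rw [Matrix.conjTranspose_smul, hA.1, star_trivial]
  · intro x
    rw [Matrix.smul_mulVec, dotProduct_smul, smul_eq_mul]
    exact mul_nonneg hc (hA.dotProduct_mulVec_nonneg x)

private lemma vecMulVec_mulVec' {p : ℕ} (x w : Fin p → ℝ) :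
    vecMulVec x x *ᵥ w = (x ⬝ᵥ w) • x := by
  ext a
  simp only [Matrix.mulVec, vecMulVec_apply, dotProduct, Pi.smul_apply,
    smul_eq_mul, Finset.sum_mul]
  apply Finset.sum_congr rfl; intro b _
  ring

private lemma sum_mulVec' {n p : ℕ} (f : Fin n → Matrix (Fin p) (Fin p) ℝ) (w : Fin p → ℝ) :
    (∑ i, f i) *ᵥ w = ∑ i, f i *ᵥ w := by
  ext a
  simp only [Matrix.mulVec, dotProduct, Finset.sum_apply, Matrix.sum_apply, Finset.sum_mul]
  rw [Finset.sum_comm]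

private lemma dotProduct_sum' {n p : ℕ} (u : Fin p → ℝ) (g : Fin n → Fin p → ℝ) :
    u ⬝ᵥ (∑ i, g i) = ∑ i, u ⬝ᵥ g i := by
  simp only [dotProduct, Finset.sum_apply, Finset.mul_sum]
  rw [Finset.sum_comm]

private lemma psd_sum {n p : ℕ} (f : Fin n → Matrix (Fin p) (Fin p) ℝ)
    (h : ∀ i, (f i).PosSemidef) : (∑ i, f i).PosSemidef := by
  refine posSemidef_iff_dotProduct_mulVec.mpr ⟨?_, ?_⟩
  · show (∑ i, f i)ᴴ = ∑ i, f i
    rw [Matrix.conjTranspose_sum]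
    exact Finset.sum_congr rfl fun i _ => (h i).1
  · intro x
    rw [sum_mulVec', dotProduct_sum']
    exact Finset.sum_nonneg fun i _ => (h i).dotProduct_mulVec_nonneg x

/-- Lemma 3 of the paper: at a ρ-approximate local optimum, the leverage score of
every candidate vector is at most (p + k(ρ−1))/(k − p + 1). -/
theorem leverage_bound_at_local_opt
    (p k n : ℕ) (hp : 0 < p) (hpk : p ≤ k) (ρ : ℝ) (hρ : 1 ≤ ρ)
    (v : Fin n → Fin p → ℝ) (m : Fin n → ℤ) (hm : ∀ i, 0 ≤ m i)
    (hmk : ∑ i, m i = (k : ℤ))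
    (S : Matrix (Fin p) (Fin p) ℝ)
    (hS : S = ∑ i, (m i : ℝ) • vecMulVec (v i) (v i))
    (hSinv : IsUnit S.det)
    (hlocal : ∀ i, 0 < m i → ∀ j,
      (S - vecMulVec (v i) (v i) + vecMulVec (v j) (v j)).det ≤ ρ * S.det) :
    ∀ j, v j ⬝ᵥ S⁻¹ *ᵥ v j ≤ ((p : ℝ) + k * (ρ - 1)) / ((k : ℝ) - p + 1) := by
  intro j
  set B := S⁻¹ with hB
  have hSB : S * B = 1 := mul_nonsing_inv S hSinv
  have hBS : B * S = 1 := nonsing_inv_mul S hSinv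
  -- S is positive semidefinite
  have hpsd : S.PosSemidef := by
    rw [hS]
    exact psd_sum _ fun i => psd_smul' (psd_vecMulVec (v i)) (by exact_mod_cast hm i)
  -- S is positive definite
  have hpd : S.PosDef := by
    refine posDef_iff_dotProduct_mulVec.mpr ⟨hpsd.1, fun x hx => ?_⟩
    rcases (hpsd.dotProduct_mulVec_nonneg x).lt_or_eq with h | h
    · exact h
    · exfalso
      have h0 : S *ᵥ x = 0 := (hpsd.dotProduct_mulVec_zero_iff x).mp h.symm
      have hinj := Matrix.mulVec_injective_iff_isUnit.mpr
        ((Matrix.isUnit_iff_isUnit_det S).mpr hSinv)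
      exact hx (hinj (by simp [h0] : S *ᵥ x = S *ᵥ 0))
  have hdet : 0 < S.det := hpd.det_pos
  set t := v j ⬝ᵥ B *ᵥ v j with ht
  -- determinant identity
  have hdetid : ∀ i : Fin n,
      (S - vecMulVec (v i) (v i) + vecMulVec (v j) (v j)).det
        = S.det * ((1 + t) * (1 - v i ⬝ᵥ B *ᵥ v i)
            + (v j ⬝ᵥ B *ᵥ v i) * (v i ⬝ᵥ B *ᵥ v j)) := by
    intro i
    set U : Matrix (Fin p) (Fin 2) ℝ :=
      Matrix.of (fun a b => if b = 0 then v j a else v i a) with hU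
    set W : Matrix (Fin 2) (Fin p) ℝ :=
      Matrix.of (fun b a => if b = 0 then v j a else -(v i a)) with hW
    have hUW : vecMulVec (v j) (v j) - vecMulVec (v i) (v i) = U * W := by
      ext a b
      simp [Matrix.mul_apply, Fin.sum_univ_two, vecMulVec_apply, hU, hW]
      ring
    have hfact : S - vecMulVec (v i) (v i) + vecMulVec (v j) (v j)
        = S * (1 + B * (U * W)) := by
      have h1 : S * (B * (U * W)) = U * W := by
        rw [← Matrix.mul_assoc, hSB, Matrix.one_mul]
      rw [Matrix.mul_add, Matrix.mul_one, h1, ← hUW]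
      abel
    rw [hfact, det_mul]
    congr 1
    have h2 : B * (U * W) = (B * U) * W := by rw [Matrix.mul_assoc]
    rw [h2, Matrix.det_one_add_mul_comm]
    have h3 : (1 : Matrix (Fin 2) (Fin 2) ℝ) + W * (B * U) =
        !![1 + v j ⬝ᵥ B *ᵥ v j, v j ⬝ᵥ B *ᵥ v i;
           -(v i ⬝ᵥ B *ᵥ v j), 1 - v i ⬝ᵥ B *ᵥ v i] := by
      ext a b
      fin_cases a <;> fin_cases b <;>
        simp [Matrix.add_apply, Matrix.one_apply, Matrix.mul_apply, hU, hW,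
          Matrix.mulVec, dotProduct, Finset.mul_sum, sub_eq_add_neg]
    rw [h3, Matrix.det_fin_two_of]
    ring
  -- trace identity: ∑ mᵢ τᵢ = p
  have htr : ∀ x : Fin p → ℝ, (B * vecMulVec x x).trace = x ⬝ᵥ B *ᵥ x := by
    intro x
    simp only [Matrix.trace, Matrix.diag, Matrix.mul_apply, vecMulVec_apply,
      Matrix.mulVec, dotProduct, Finset.mul_sum]
    apply Finset.sum_congr rfl; intro a _
    apply Finset.sum_congr rfl; intro b _
    ring
  have hsum1 : ∑ i, (m i : ℝ) * (v i ⬝ᵥ B *ᵥ v i) = (p : ℝ) := by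
    have h1 : (B * S).trace = (p : ℝ) := by rw [hBS, Matrix.trace_one]; simp
    rw [hS, Matrix.mul_sum, Matrix.trace_sum] at h1
    simp_rw [Matrix.mul_smul, Matrix.trace_smul, smul_eq_mul, htr] at h1
    exact h1
  -- second moment identity: ∑ mᵢ cᵢ = t
  have hsum2 : ∑ i, (m i : ℝ) * ((v j ⬝ᵥ B *ᵥ v i) * (v i ⬝ᵥ B *ᵥ v j)) = t := by
    have key : (v j ᵥ* B) ⬝ᵥ (S *ᵥ (B *ᵥ v j)) = t := by
      rw [Matrix.mulVec_mulVec, hSB, Matrix.one_mulVec, ← Matrix.dotProduct_mulVec]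
    rw [← key]
    conv_rhs => rw [hS]
    rw [sum_mulVec']
    simp_rw [Matrix.smul_mulVec, vecMulVec_mulVec']
    rw [dotProduct_sum']
    apply Finset.sum_congr rfl; intro i _
    rw [Matrix.dotProduct_mulVec]
    simp only [dotProduct_smul, smul_eq_mul, smul_smul]
    ring
  -- main inequality
  have hk : ∑ i, (m i : ℝ) = (k : ℝ) := by exact_mod_cast congrArg (Int.cast : ℤ → ℝ) hmk
  have hineq : (1 + t) * ((k : ℝ) - p) + t ≤ ρ * k := by
    have hsum : ∑ i, (m i : ℝ) * ((1 + t) * (1 - v i ⬝ᵥ B *ᵥ v i)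
          + (v j ⬝ᵥ B *ᵥ v i) * (v i ⬝ᵥ B *ᵥ v j)) ≤ ∑ i, (m i : ℝ) * ρ := by
      apply Finset.sum_le_sum
      intro i _
      rcases (hm i).lt_or_eq with hmi | hmi
      · have h1 := hlocal i hmi j
        rw [hdetid i] at h1
        have h2 : (1 + t) * (1 - v i ⬝ᵥ B *ᵥ v i)
            + (v j ⬝ᵥ B *ᵥ v i) * (v i ⬝ᵥ B *ᵥ v j) ≤ ρ := by
          nlinarith [hdet]
        have hmi' : (0 : ℝ) ≤ (m i : ℝ) := by exact_mod_cast (hm i)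
        exact mul_le_mul_of_nonneg_left h2 hmi'
      · rw [← hmi]; simp
    have hexp : ∑ i, (m i : ℝ) * ((1 + t) * (1 - v i ⬝ᵥ B *ᵥ v i)
          + (v j ⬝ᵥ B *ᵥ v i) * (v i ⬝ᵥ B *ᵥ v j))
        = (1 + t) * ((k : ℝ) - p) + t := by
      have h3 : ∀ i : Fin n, (m i : ℝ) * ((1 + t) * (1 - v i ⬝ᵥ B *ᵥ v i)
          + (v j ⬝ᵥ B *ᵥ v i) * (v i ⬝ᵥ B *ᵥ v j))
          = ((1 + t) * (m i : ℝ) - (1 + t) * ((m i : ℝ) * (v i ⬝ᵥ B *ᵥ v i)))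
            + (m i : ℝ) * ((v j ⬝ᵥ B *ᵥ v i) * (v i ⬝ᵥ B *ᵥ v j)) := by
        intro i; ring
      rw [Finset.sum_congr rfl (fun i _ => h3 i), Finset.sum_add_distrib,
        Finset.sum_sub_distrib, ← Finset.mul_sum, ← Finset.mul_sum, hk, hsum1, hsum2]
      ring
    rw [hexp, ← Finset.sum_mul, hk] at hsum
    linarith [hsum]
  -- conclude
  have hden : (0 : ℝ) < (k : ℝ) - p + 1 := by
    have : (p : ℝ) ≤ k := by exact_mod_cast hpk
    linarith
  rw [le_div_iff₀ hden]
  have hkr : (p : ℝ) ≤ (k : ℝ) := by exact_mod_cast hpk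
  nlinarith [hineq]
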